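/- Let α, γ > 0 with α ≥ γ/2, and suppose for each ε ∈ (0, e^{-1}) one chooses L with s^{-αL} ≈ ε (so L+1 ≤ C|log ε|), per-level costs C_ℓ ≤ c s^{γℓ} and variances V_ℓ ≤ v s^{-βℓ} with β < γ, and sample numbers N_ℓ such that (L+1)Σ_ℓ V_ℓ/N_ℓ ≤ ε²/2. Then N_ℓ can be chosen so that the total cost Σ_ℓ N_ℓ C_ℓ is bounded by C·ε^{-2-(γ-β)/α}·|log ε|. -/

import Mathlib

open Finset

lemma mlmc_ratio_mono {a x : ℝ} (ha : 1 < a) (hax : a ≤ x) : x / (x - 1) ≤ a / (a - 1) := by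
  rw [div_le_div_iff₀ (by linarith) (by linarith)]
  nlinarith

lemma mlmc_geo_aux (x : ℝ) (hx : 1 < x) (L : ℕ) :
    ∑ ℓ ∈ range (L + 1), x ^ ℓ ≤ x / (x - 1) * x ^ L := by
  rw [geom_sum_eq (by linarith)]
  have h2 : (0:ℝ) < x - 1 := by linarith
  rw [div_le_iff₀ h2]
  have e : x / (x - 1) * x ^ L * (x - 1) = x ^ (L + 1) := by field_simp; ring
  rw [e]; linarith

lemma mlmc_geo_bound (s t : ℝ) (hs : 2 ≤ s) (ht : 0 < t) (L : ℕ) :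
    ∑ ℓ ∈ range (L + 1), s ^ (t * (ℓ : ℝ)) ≤
      (2:ℝ) ^ t / ((2:ℝ) ^ t - 1) * s ^ (t * (L : ℝ)) := by
  have hs0 : (0:ℝ) ≤ s := by linarith
  have h2t : (1:ℝ) < (2:ℝ) ^ t :=
    Real.one_lt_rpow_iff_of_pos (by norm_num) |>.mpr (Or.inl ⟨by norm_num, ht⟩)
  have hst : (2:ℝ) ^ t ≤ s ^ t := Real.rpow_le_rpow (by norm_num) hs ht.le
  have h1 : (1:ℝ) < s ^ t := lt_of_lt_of_le h2t hst
  have key : ∀ ℓ : ℕ, s ^ (t * (ℓ : ℝ)) = (s ^ t) ^ ℓ := by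
    intro ℓ
    rw [Real.rpow_mul hs0, Real.rpow_natCast]
  simp_rw [key]
  calc ∑ ℓ ∈ range (L + 1), (s ^ t) ^ ℓ ≤ s ^ t / (s ^ t - 1) * (s ^ t) ^ L :=
        mlmc_geo_aux _ h1 L
    _ ≤ (2:ℝ) ^ t / ((2:ℝ) ^ t - 1) * (s ^ t) ^ L := by
        apply mul_le_mul_of_nonneg_right (mlmc_ratio_mono h2t hst)
        positivity

lemma mlmc_sqrt_div {a b : ℝ} (ha : 0 < a) (hb : 0 < b) :
    a / Real.sqrt (a / b) = Real.sqrt (a * b) := by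
  rw [Real.sqrt_div ha.le, Real.sqrt_mul ha.le]
  have hsa : 0 < Real.sqrt a := Real.sqrt_pos.mpr ha
  have hsb : 0 < Real.sqrt b := Real.sqrt_pos.mpr hb
  rw [div_div_eq_mul_div, div_eq_iff hsa.ne']
  nlinarith [Real.mul_self_sqrt ha.le]

lemma mlmc_sqrt_mul {a b : ℝ} (ha : 0 < a) (hb : 0 < b) :
    Real.sqrt (a / b) * b = Real.sqrt (a * b) := by
  rw [Real.sqrt_div ha.le, Real.sqrt_mul ha.le]
  have hsb : 0 < Real.sqrt b := Real.sqrt_pos.mpr hb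
  rw [div_mul_eq_mul_div, div_eq_iff hsb.ne', mul_assoc, Real.mul_self_sqrt hb.le]

/-- Abstract multilevel MCMC complexity bound (case `β < γ`): with a geometric level
hierarchy of ratio `s ≥ 2`, per-level costs `Cℓ ≤ c s^{γℓ}`, variances `Vℓ ≤ v s^{-βℓ}`,
`α ≥ γ/2`, and the finest level `L` chosen so that `s^{-αL} ≈ ε`, the sample numbers `Nℓ`
can be chosen so that `(L+1) ∑ℓ Vℓ/Nℓ ≤ ε²/2` while the total cost `∑ℓ Nℓ Cℓ` is bounded
by `K ε^{-2-(γ-β)/α} |log ε|`. -/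
theorem mlmc_complexity_bound
    (s : ℝ) (hs : 2 ≤ s) (α β γ c v : ℝ)
    (hα : 0 < α) (hβ : 0 < β) (hγ : 0 < γ) (hβγ : β < γ) (hαγ : γ / 2 ≤ α)
    (hc : 0 < c) (hv : 0 < v) :
    ∃ K : ℝ, 0 < K ∧
      ∀ ε : ℝ, 0 < ε → ε < Real.exp (-1) →
        ∀ L : ℕ, s ^ (-(α * ((L : ℝ) + 1))) ≤ ε → ε ≤ s ^ (-(α * (L : ℝ))) →
          ∀ C V : ℕ → ℝ,
            (∀ ℓ, 0 < C ℓ) → (∀ ℓ ≤ L, C ℓ ≤ c * s ^ (γ * (ℓ : ℝ))) →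
            (∀ ℓ, 0 < V ℓ) → (∀ ℓ ≤ L, V ℓ ≤ v * s ^ (-(β * (ℓ : ℝ)))) →
            ∃ N : ℕ → ℝ, (∀ ℓ ≤ L, 1 ≤ N ℓ) ∧
              ((L : ℝ) + 1) * ∑ ℓ ∈ range (L + 1), V ℓ / N ℓ ≤ ε ^ 2 / 2 ∧
              ∑ ℓ ∈ range (L + 1), N ℓ * C ℓ ≤
                K * ε ^ (-2 - (γ - β) / α) * |Real.log ε| := by
  have hs0 : (0:ℝ) < s := by linarith
  have hlog2 : (0:ℝ) < Real.log 2 := Real.log_pos (by norm_num)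
  set t2 : ℝ := (γ - β) / 2 with ht2_def
  have ht2 : 0 < t2 := by simp only [ht2_def]; linarith
  set A1 : ℝ := (2:ℝ) ^ γ / ((2:ℝ) ^ γ - 1) with hA1_def
  set A2 : ℝ := (2:ℝ) ^ t2 / ((2:ℝ) ^ t2 - 1) with hA2_def
  set KL : ℝ := 1 / (α * Real.log 2) + 1 with hKL_def
  have h2γ : (1:ℝ) < (2:ℝ) ^ γ :=
    Real.one_lt_rpow_iff_of_pos (by norm_num) |>.mpr (Or.inl ⟨by norm_num, hγ⟩)
  have h2t2 : (1:ℝ) < (2:ℝ) ^ t2 :=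
    Real.one_lt_rpow_iff_of_pos (by norm_num) |>.mpr (Or.inl ⟨by norm_num, ht2⟩)
  have hA1 : 0 < A1 := div_pos (by linarith) (by linarith)
  have hA2 : 0 < A2 := div_pos (by linarith) (by linarith)
  have hKL : 0 < KL := by
    have : 0 < 1 / (α * Real.log 2) := by positivity
    simp only [hKL_def]; linarith
  refine ⟨c * A1 + 2 * KL * (v * c) * A2 ^ 2, by positivity, ?_⟩
  intro ε hε hεe L hL1 hL2 C V hCpos hCb hVpos hVb
  have hε1 : ε < 1 := hεe.trans (by rw [Real.exp_lt_one_iff]; norm_num)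
  have hlogε : Real.log ε < -1 := by
    have := Real.log_lt_log hε hεe
    rwa [Real.log_exp] at this
  have habs : |Real.log ε| = -Real.log ε := abs_of_neg (by linarith)
  have h1log : 1 ≤ |Real.log ε| := by rw [habs]; linarith
  -- s^{αL} ≤ ε⁻¹
  have hεinv : s ^ (α * (L:ℝ)) ≤ ε⁻¹ := by
    have h := hL2
    rw [Real.rpow_neg hs0.le] at h
    have := inv_anti₀ hε h
    rwa [inv_inv] at this
  -- power bound
  have hpow : ∀ t : ℝ, 0 ≤ t → s ^ (t * (L:ℝ)) ≤ ε ^ (-(t / α)) := by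
    intro t ht
    have h1 : s ^ (t * (L:ℝ)) = (s ^ (α * (L:ℝ))) ^ (t / α) := by
      rw [← Real.rpow_mul hs0.le]
      congr 1
      field_simp
    rw [h1]
    calc (s ^ (α * (L:ℝ))) ^ (t / α) ≤ (ε⁻¹) ^ (t / α) :=
          Real.rpow_le_rpow (Real.rpow_pos_of_pos hs0 _).le hεinv (by positivity)
      _ = ε ^ (-(t / α)) := by
          rw [← Real.rpow_neg_one ε, ← Real.rpow_mul hε.le]
          congr 1; ring
  -- L bound
  have hLb : (L:ℝ) + 1 ≤ KL * |Real.log ε| := by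
    have hlogs : Real.log 2 ≤ Real.log s := Real.log_le_log (by norm_num) hs
    have h := Real.log_le_log hε hL2
    rw [Real.log_rpow hs0] at h
    have hL' : α * (L:ℝ) * Real.log s ≤ -Real.log ε := by linarith
    have hLc : (L:ℝ) ≤ |Real.log ε| / (α * Real.log 2) := by
      rw [habs, le_div_iff₀ (by positivity)]
      have hL0 : (0:ℝ) ≤ (L:ℝ) := Nat.cast_nonneg L
      nlinarith
    have : (L:ℝ) + 1 ≤ |Real.log ε| / (α * Real.log 2) + |Real.log ε| := by linarith
    calc (L:ℝ) + 1 ≤ |Real.log ε| / (α * Real.log 2) + |Real.log ε| := this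
      _ = KL * |Real.log ε| := by rw [hKL_def]; ring
  set E : ℝ := ε ^ (-2 - (γ - β) / α) with hE_def
  have hEpos : 0 < E := Real.rpow_pos_of_pos hε _
  -- cost sum bound
  have hexp : -2 - (γ - β) / α ≤ -(γ / α) := by
    have hβα : β / α ≤ 2 := by
      rw [div_le_iff₀ hα]; linarith
    have : γ / α - (γ - β) / α = β / α := by ring
    linarith
  have hsumC : ∑ ℓ ∈ range (L + 1), C ℓ ≤ c * A1 * E := by
    calc ∑ ℓ ∈ range (L + 1), C ℓ ≤ ∑ ℓ ∈ range (L + 1), c * s ^ (γ * (ℓ:ℝ)) := by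
          apply sum_le_sum
          intro ℓ hℓ
          exact hCb ℓ (Nat.lt_succ_iff.mp (mem_range.mp hℓ))
      _ = c * ∑ ℓ ∈ range (L + 1), s ^ (γ * (ℓ:ℝ)) := by rw [mul_sum]
      _ ≤ c * (A1 * s ^ (γ * (L:ℝ))) :=
          mul_le_mul_of_nonneg_left (mlmc_geo_bound s γ hs hγ L) hc.le
      _ ≤ c * (A1 * ε ^ (-(γ / α))) := by
          have := hpow γ hγ.le
          have h' : A1 * s ^ (γ * (L:ℝ)) ≤ A1 * ε ^ (-(γ / α)) :=
            mul_le_mul_of_nonneg_left this hA1.le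
          exact mul_le_mul_of_nonneg_left h' hc.le
      _ ≤ c * (A1 * E) := by
          have := Real.rpow_le_rpow_of_exponent_ge hε hε1.le hexp
          have h' : A1 * ε ^ (-(γ / α)) ≤ A1 * E := mul_le_mul_of_nonneg_left this hA1.le
          exact mul_le_mul_of_nonneg_left h' hc.le
      _ = c * A1 * E := by ring
  -- S and its bound
  set S : ℝ := ∑ j ∈ range (L + 1), Real.sqrt (V j * C j) with hS_def
  have hSpos : 0 < S := by
    apply sum_pos
    · intro j hj
      exact Real.sqrt_pos.mpr (mul_pos (hVpos j) (hCpos j))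
    · exact ⟨0, by simp⟩
  have hSb : S ≤ Real.sqrt (v * c) * A2 * ε ^ (-(t2 / α)) := by
    have hterm : ∀ ℓ ∈ range (L + 1),
        Real.sqrt (V ℓ * C ℓ) ≤ Real.sqrt (v * c) * s ^ (t2 * (ℓ:ℝ)) := by
      intro ℓ hℓ
      have hℓL := Nat.lt_succ_iff.mp (mem_range.mp hℓ)
      have h1 : V ℓ * C ℓ ≤ (v * s ^ (-(β * (ℓ:ℝ)))) * (c * s ^ (γ * (ℓ:ℝ))) := by
        apply mul_le_mul (hVb ℓ hℓL) (hCb ℓ hℓL) (hCpos ℓ).le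
        positivity
      have h2 : (v * s ^ (-(β * (ℓ:ℝ)))) * (c * s ^ (γ * (ℓ:ℝ)))
          = v * c * s ^ ((γ - β) * (ℓ:ℝ)) := by
        rw [show ((γ - β) * (ℓ:ℝ)) = -(β * (ℓ:ℝ)) + γ * (ℓ:ℝ) by ring,
          Real.rpow_add hs0]
        ring
      calc Real.sqrt (V ℓ * C ℓ) ≤ Real.sqrt (v * c * s ^ ((γ - β) * (ℓ:ℝ))) :=
            Real.sqrt_le_sqrt (h1.trans_eq h2)
        _ = Real.sqrt (v * c) * Real.sqrt (s ^ ((γ - β) * (ℓ:ℝ))) :=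
            Real.sqrt_mul (by positivity) _
        _ = Real.sqrt (v * c) * s ^ (t2 * (ℓ:ℝ)) := by
            congr 1
            rw [Real.sqrt_eq_rpow, ← Real.rpow_mul hs0.le]
            congr 1
            rw [ht2_def]; ring
    calc S ≤ ∑ ℓ ∈ range (L + 1), Real.sqrt (v * c) * s ^ (t2 * (ℓ:ℝ)) :=
          sum_le_sum hterm
      _ = Real.sqrt (v * c) * ∑ ℓ ∈ range (L + 1), s ^ (t2 * (ℓ:ℝ)) := by rw [mul_sum]
      _ ≤ Real.sqrt (v * c) * (A2 * s ^ (t2 * (L:ℝ))) :=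
          mul_le_mul_of_nonneg_left (mlmc_geo_bound s t2 hs ht2 L) (Real.sqrt_nonneg _)
      _ ≤ Real.sqrt (v * c) * (A2 * ε ^ (-(t2 / α))) := by
          have h' : A2 * s ^ (t2 * (L:ℝ)) ≤ A2 * ε ^ (-(t2 / α)) :=
            mul_le_mul_of_nonneg_left (hpow t2 ht2.le) hA2.le
          exact mul_le_mul_of_nonneg_left h' (Real.sqrt_nonneg _)
      _ = Real.sqrt (v * c) * A2 * ε ^ (-(t2 / α)) := by ring
  -- choose N
  set N : ℕ → ℝ := fun ℓ =>
    1 + 2 * ((L:ℝ) + 1) / ε ^ 2 * Real.sqrt (V ℓ / C ℓ) * S with hN_def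
  have haux : ∀ ℓ, 0 < 2 * ((L:ℝ) + 1) / ε ^ 2 * Real.sqrt (V ℓ / C ℓ) * S := by
    intro ℓ
    have h1 : 0 < Real.sqrt (V ℓ / C ℓ) :=
      Real.sqrt_pos.mpr (div_pos (hVpos ℓ) (hCpos ℓ))
    have h2 : 0 < 2 * ((L:ℝ) + 1) / ε ^ 2 := by positivity
    exact mul_pos (mul_pos h2 h1) hSpos
  refine ⟨N, ?_, ?_, ?_⟩
  · intro ℓ _
    simp only [hN_def]
    linarith [haux ℓ]
  · -- variance condition
    have key : ∀ ℓ ∈ range (L + 1),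
        V ℓ / N ℓ ≤ Real.sqrt (V ℓ * C ℓ) * (ε ^ 2 / (2 * ((L:ℝ) + 1) * S)) := by
      intro ℓ hℓ
      have h1 : 0 < Real.sqrt (V ℓ / C ℓ) :=
        Real.sqrt_pos.mpr (div_pos (hVpos ℓ) (hCpos ℓ))
      have hNge : 2 * ((L:ℝ) + 1) / ε ^ 2 * Real.sqrt (V ℓ / C ℓ) * S ≤ N ℓ := by
        simp only [hN_def]; linarith
      calc V ℓ / N ℓ ≤ V ℓ / (2 * ((L:ℝ) + 1) / ε ^ 2 * Real.sqrt (V ℓ / C ℓ) * S) := by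
            apply div_le_div_of_nonneg_left (hVpos ℓ).le (haux ℓ) hNge
        _ = Real.sqrt (V ℓ * C ℓ) * (ε ^ 2 / (2 * ((L:ℝ) + 1) * S)) := by
            have e := mlmc_sqrt_div (hVpos ℓ) (hCpos ℓ)
            have h3 : 2 * ((L:ℝ) + 1) / ε ^ 2 * Real.sqrt (V ℓ / C ℓ) * S
                = Real.sqrt (V ℓ / C ℓ) * ((2 * ((L:ℝ) + 1) * S) / ε ^ 2) := by ring
            rw [h3, ← div_div, e, div_div_eq_mul_div, mul_div_assoc]
    calc ((L:ℝ) + 1) * ∑ ℓ ∈ range (L + 1), V ℓ / N ℓ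
        ≤ ((L:ℝ) + 1) * ∑ ℓ ∈ range (L + 1),
            Real.sqrt (V ℓ * C ℓ) * (ε ^ 2 / (2 * ((L:ℝ) + 1) * S)) := by
          apply mul_le_mul_of_nonneg_left (sum_le_sum key) (by positivity)
      _ = ((L:ℝ) + 1) * (S * (ε ^ 2 / (2 * ((L:ℝ) + 1) * S))) := by
          rw [← sum_mul, ← hS_def]
      _ = ε ^ 2 / 2 := by
          have hL1' : ((L:ℝ) + 1) ≠ 0 := by positivity
          field_simp
  · -- cost bound
    have hNC : ∀ ℓ ∈ range (L + 1), N ℓ * C ℓ =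
        C ℓ + 2 * ((L:ℝ) + 1) / ε ^ 2 * S * Real.sqrt (V ℓ * C ℓ) := by
      intro ℓ hℓ
      have e := mlmc_sqrt_mul (hVpos ℓ) (hCpos ℓ)
      simp only [hN_def]
      calc (1 + 2 * ((L:ℝ) + 1) / ε ^ 2 * Real.sqrt (V ℓ / C ℓ) * S) * C ℓ
          = C ℓ + 2 * ((L:ℝ) + 1) / ε ^ 2 * S * (Real.sqrt (V ℓ / C ℓ) * C ℓ) := by ring
        _ = C ℓ + 2 * ((L:ℝ) + 1) / ε ^ 2 * S * Real.sqrt (V ℓ * C ℓ) := by rw [e]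
    have hsum : ∑ ℓ ∈ range (L + 1), N ℓ * C ℓ
        = (∑ ℓ ∈ range (L + 1), C ℓ) + 2 * ((L:ℝ) + 1) / ε ^ 2 * S * S := by
      rw [sum_congr rfl hNC, sum_add_distrib, ← mul_sum, ← hS_def]
    rw [hsum]
    -- bound the second term
    have hSB2 : S * S ≤ (v * c) * A2 ^ 2 * ε ^ (-(t2 / α) * 2) := by
      have hSBnn : 0 ≤ Real.sqrt (v * c) * A2 * ε ^ (-(t2 / α)) := by positivity
      calc S * S ≤ (Real.sqrt (v * c) * A2 * ε ^ (-(t2 / α))) *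
            (Real.sqrt (v * c) * A2 * ε ^ (-(t2 / α))) :=
            mul_le_mul hSb hSb hSpos.le hSBnn
        _ = (Real.sqrt (v * c) * Real.sqrt (v * c)) * A2 ^ 2 *
            (ε ^ (-(t2 / α)) * ε ^ (-(t2 / α))) := by ring
        _ = (v * c) * A2 ^ 2 * ε ^ (-(t2 / α) * 2) := by
            rw [Real.mul_self_sqrt (by positivity), ← Real.rpow_add hε]
            congr 1
            ring
    have hterm2 : 2 * ((L:ℝ) + 1) / ε ^ 2 * S * S ≤ 2 * KL * (v * c) * A2 ^ 2 * E * |Real.log ε| := by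
      have hX : 0 < 2 * ((L:ℝ) + 1) / ε ^ 2 := by positivity
      have step1 : 2 * ((L:ℝ) + 1) / ε ^ 2 * S * S ≤
          2 * ((L:ℝ) + 1) / ε ^ 2 * ((v * c) * A2 ^ 2 * ε ^ (-(t2 / α) * 2)) := by
        rw [mul_assoc]
        exact mul_le_mul_of_nonneg_left hSB2 hX.le
      have step2 : 2 * ((L:ℝ) + 1) / ε ^ 2 * ((v * c) * A2 ^ 2 * ε ^ (-(t2 / α) * 2))
          = 2 * ((L:ℝ) + 1) * ((v * c) * A2 ^ 2) * E := by
        have hε2 : (ε:ℝ) ^ (2:ℕ) = ε ^ ((2:ℝ)) := by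
          rw [← Real.rpow_natCast ε 2]; norm_num
        have hkey : ε ^ (-(t2 / α) * 2) / ε ^ 2 = E := by
          rw [hε2, ← Real.rpow_sub hε, hE_def]
          congr 1
          rw [ht2_def]
          field_simp
          ring
        calc 2 * ((L:ℝ) + 1) / ε ^ 2 * ((v * c) * A2 ^ 2 * ε ^ (-(t2 / α) * 2))
            = 2 * ((L:ℝ) + 1) * ((v * c) * A2 ^ 2) * (ε ^ (-(t2 / α) * 2) / ε ^ 2) := by
              ring
          _ = 2 * ((L:ℝ) + 1) * ((v * c) * A2 ^ 2) * E := by rw [hkey]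
      have step3 : 2 * ((L:ℝ) + 1) * ((v * c) * A2 ^ 2) * E ≤
          2 * (KL * |Real.log ε|) * ((v * c) * A2 ^ 2) * E := by
        have h2 : 0 < (v * c) * A2 ^ 2 := by positivity
        have : 2 * ((L:ℝ) + 1) ≤ 2 * (KL * |Real.log ε|) := by linarith
        exact mul_le_mul_of_nonneg_right (mul_le_mul_of_nonneg_right this h2.le) hEpos.le
      calc 2 * ((L:ℝ) + 1) / ε ^ 2 * S * S
          ≤ 2 * ((L:ℝ) + 1) * ((v * c) * A2 ^ 2) * E := step1.trans_eq step2
        _ ≤ 2 * (KL * |Real.log ε|) * ((v * c) * A2 ^ 2) * E := step3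
        _ = 2 * KL * (v * c) * A2 ^ 2 * E * |Real.log ε| := by ring
    have hfirst : c * A1 * E ≤ c * A1 * E * |Real.log ε| := by
      calc c * A1 * E = c * A1 * E * 1 := by rw [mul_one]
        _ ≤ c * A1 * E * |Real.log ε| :=
            mul_le_mul_of_nonneg_left h1log (mul_pos (mul_pos hc hA1) hEpos).le
    calc (∑ ℓ ∈ range (L + 1), C ℓ) + 2 * ((L:ℝ) + 1) / ε ^ 2 * S * S
        ≤ c * A1 * E * |Real.log ε| + 2 * KL * (v * c) * A2 ^ 2 * E * |Real.log ε| := by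
          have := hsumC.trans hfirst
          linarith [hterm2]
      _ = (c * A1 + 2 * KL * (v * c) * A2 ^ 2) * E * |Real.log ε| := by ring
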